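/- For all x, y ∈ X₀, regarded as elements of X by taking x_0 = y_0 = 0 in ℝ/ℤ, one has d(x, y) ≤ 2 r^{-1} ρ(x, y). -/

import Mathlib

open scoped Real
noncomputable section

/-- `X = ∏_{l≥0} ℝ/r^l ℤ`, with coordinatewise addition and the product topology. -/
abbrev SolX (r : ℕ) := (l : ℕ) → AddCircle ((r : ℝ) ^ l)

/-- The natural homomorphism `ℝ/r^{l+1}ℤ → ℝ/r^l ℤ` induced by the identity on `ℝ`. -/
def natHom (r l : ℕ) : AddCircle ((r : ℝ) ^ (l + 1)) →+ AddCircle ((r : ℝ) ^ l) :=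
  QuotientAddGroup.map _ _ (AddMonoidHom.id ℝ) (by
    intro x hx
    rw [AddSubgroup.mem_comap]
    obtain ⟨k, hk⟩ := AddSubgroup.mem_zmultiples_iff.mp hx
    refine AddSubgroup.mem_zmultiples_iff.mpr ⟨k * (r : ℤ), ?_⟩
    simp only [AddMonoidHom.id_apply, zsmul_eq_mul] at hk ⊢
    rw [← hk]
    push_cast
    ring)

/-- `x ∈ X` is a coherent sequence if `x l` is the image of `x (l+1)` under the natural
homomorphism, for every `l`. -/
def Coherent (r : ℕ) (x : SolX r) : Prop := ∀ l, natHom r l (x (l + 1)) = x l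

/-- The standard isomorphism `φ_l : ℝ/r^l ℤ → 𝕋 ⊆ ℂ`, `φ_l(a mod r^l ℤ) = exp(2πi r^{-l} a)`,
viewed as a complex-valued function. -/
def phi (r l : ℕ) (x : AddCircle ((r : ℝ) ^ l)) : ℂ := (AddCircle.toCircle x : ℂ)

/-- The `l`-th term `r^{-l} |φ_l(x_l) - φ_l(y_l)|`. -/
def dterm (r : ℕ) (x y : SolX r) (l : ℕ) : ℝ :=
  ((r : ℝ) ^ l)⁻¹ * ‖phi r l (x l) - phi r l (y l)‖

/-- `d(x,y) = max_{l ≥ 0} r^{-l} |φ_l(x_l) - φ_l(y_l)|`. -/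
def dX (r : ℕ) (x y : SolX r) : ℝ := ⨆ l, dterm r x y l

/-- `X₀ = ∏_{l≥1} ℤ/r^l ℤ`; the coordinate indexed by `l : ℕ` here is the factor
`ℤ/r^(l+1) ℤ` (paper index `l+1`).  Each factor carries the discrete topology, and `X₀`
the product topology. -/
abbrev X0 (r : ℕ) := (l : ℕ) → ZMod (r ^ (l + 1))

/-- For `x ≠ y`, the (`0`-based) index of the first coordinate where `x` and `y` differ;
in the paper's (`1`-based) notation this is `l(x,y) - 1`. -/
def firstDiff (r : ℕ) (x y : X0 r) : ℕ := sInf {n | x n ≠ y n}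

open Classical in
/-- `ρ(x,y) = r^{-l(x,y)+1}`, and `ρ(x,x) = 0`. -/
def rho (r : ℕ) (x y : X0 r) : ℝ :=
  if x = y then 0 else ((r : ℝ) ^ firstDiff r x y)⁻¹

/-- The identification of `X₀` with a subset of `X`: the `l = 0` coordinate is `0` in `ℝ/ℤ`,
and for `l ≥ 1` the coordinate `x_l ∈ ℤ/r^l ℤ` is regarded as an element of `ℝ/r^l ℤ`. -/
def emb (r : ℕ) (x : X0 r) : SolX r
  | 0 => 0
  | (l + 1) => (((x l).val : ℝ) : AddCircle ((r : ℝ) ^ (l + 1)))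

/-- For `x, y ∈ X₀`, regarded as elements of `X`, one has `d(x,y) ≤ 2 r⁻¹ ρ(x,y)`. -/
theorem stmt_6 (r : ℕ) (hr : 2 ≤ r) :
    ∀ x y : X0 r, dX r (emb r x) (emb r y) ≤ 2 * (r : ℝ)⁻¹ * rho r x y := by
  intro x y
  have hr0 : (0:ℝ) < r := by positivity
  have hrho0 : 0 ≤ rho r x y := by
    unfold rho; split <;> positivity
  apply ciSup_le
  intro l
  match l with
  | 0 =>
    have : emb r x 0 = emb r y 0 := rfl
    simp [dterm, this]
    positivity
  | (l+1) =>
    by_cases hxy : x = y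
    · subst hxy
      simp [dterm, rho]
    · have hrho : rho r x y = ((r:ℝ) ^ firstDiff r x y)⁻¹ := by simp [rho, hxy]
      by_cases hl : l < firstDiff r x y
      · have hx : x l = y l := by
          by_contra h
          exact absurd (Nat.sInf_le h) (Nat.not_le.mpr hl)
        have : emb r x (l+1) = emb r y (l+1) := by simp [emb, hx]
        simp [dterm, this]
        positivity
      · push_neg at hl
        have h2 : ‖phi r (l+1) (emb r x (l+1)) - phi r (l+1) (emb r y (l+1))‖ ≤ 2 := by
          refine (norm_sub_le _ _).trans ?_
          simp [phi, Circle.norm_coe]; norm_num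
        have h3 : dterm r (emb r x) (emb r y) (l+1) ≤ ((r:ℝ)^(l+1))⁻¹ * 2 := by
          unfold dterm
          exact mul_le_mul_of_nonneg_left h2 (by positivity)
        refine h3.trans ?_
        rw [hrho]
        have hpow : (r:ℝ) ^ (firstDiff r x y + 1) ≤ (r:ℝ)^(l+1) :=
          pow_le_pow_right₀ (by exact_mod_cast Nat.one_le_of_lt hr) (by omega)
        have := inv_anti₀ (by positivity) hpow
        calc ((r:ℝ)^(l+1))⁻¹ * 2 ≤ ((r:ℝ)^(firstDiff r x y + 1))⁻¹ * 2 :=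
              mul_le_mul_of_nonneg_right this (by norm_num)
          _ = 2 * (r:ℝ)⁻¹ * ((r:ℝ)^(firstDiff r x y))⁻¹ := by
              rw [pow_succ, mul_inv]; ring
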